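/- Let Ω ⊆ ℝⁿ be open, let ζ : Ω → ℂ² be differentiable with ζ(x) a nonzero Majorana spinor for every x ∈ Ω, let a,b ∈ ℝ with (a,b) ≠ (0,0), and set χ(x) = a·ζ(x) + b·(i·σ₃)·ζ(x). Then χ(x) is a nonzero Majorana spinor for every x, and for every coordinate direction μ ∈ {1,…,n} and every x ∈ Ω the contracted derivative of the bilinears is unchanged: Y₁(χ(x))·∂_μ[X₁∘χ](x) + Y₂(χ(x))·∂_μ[X₂∘χ](x) = Y₁(ζ(x))·∂_μ[X₁∘ζ](x) + Y₂(ζ(x))·∂_μ[X₂∘ζ](x). -/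

import Mathlib

open Matrix Complex
open ComplexConjugate

noncomputable section

/-- Pauli matrix σ₁. -/
def σ1 : Matrix (Fin 2) (Fin 2) ℂ := !![0, 1; 1, 0]
/-- Pauli matrix σ₂. -/
def σ2 : Matrix (Fin 2) (Fin 2) ℂ := !![0, -I; I, 0]
/-- Pauli matrix σ₃. -/
def σ3 : Matrix (Fin 2) (Fin 2) ℂ := !![1, 0; 0, -1]

/-- A spinor ζ ∈ ℂ² is Majorana if conj(ζ) = i σ₁ ζ componentwise. -/
def IsMajorana (ζ : Fin 2 → ℂ) : Prop := star ζ = (I • σ1).mulVec ζ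

/-- The bilinear N(ζ) = ζ†ζ. -/
def Nbil (ζ : Fin 2 → ℂ) : ℂ := star ζ ⬝ᵥ ζ

/-- The bilinear X₁(ζ) = (ζ†σ₁ζ)/N(ζ). -/
def X1 (ζ : Fin 2 → ℂ) : ℂ := (star ζ ⬝ᵥ σ1.mulVec ζ) / Nbil ζ

/-- The bilinear X₂(ζ) = (ζ†σ₂ζ)/N(ζ). -/
def X2 (ζ : Fin 2 → ℂ) : ℂ := (star ζ ⬝ᵥ σ2.mulVec ζ) / Nbil ζ

/-- Y₁(ζ) = X₂(ζ). -/
def Y1 (ζ : Fin 2 → ℂ) : ℂ := X2 ζ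

/-- Y₂(ζ) = −X₁(ζ). -/
def Y2 (ζ : Fin 2 → ℂ) : ℂ := -X1 ζ

/-- The partial derivative in the μ-th coordinate direction of ℝⁿ. -/
def pderiv {n : ℕ} {E : Type*} [NormedAddCommGroup E] [NormedSpace ℝ E]
    (μ : Fin n) (f : (Fin n → ℝ) → E) (x : Fin n → ℝ) : E :=
  fderiv ℝ f x (Pi.single μ 1)

lemma Nbil_expand (v : Fin 2 → ℂ) : Nbil v = conj (v 0) * v 0 + conj (v 1) * v 1 := by
  simp [Nbil, dotProduct, Fin.sum_univ_two]

lemma S1_expand (v : Fin 2 → ℂ) : star v ⬝ᵥ σ1.mulVec v = conj (v 0) * v 1 + conj (v 1) * v 0 := by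
  simp [σ1, dotProduct, mulVec, Fin.sum_univ_two]

lemma S2_expand (v : Fin 2 → ℂ) :
    star v ⬝ᵥ σ2.mulVec v = -(conj (v 0) * I * v 1) + I * conj (v 1) * v 0 := by
  simp [σ2, dotProduct, mulVec, Fin.sum_univ_two]; ring

lemma chi0 (a b : ℝ) (v : Fin 2 → ℂ) :
    ((a:ℂ) • v + (b:ℂ) • (I • σ3).mulVec v) 0 = ((a:ℂ) + b*I) * v 0 := by
  simp [σ3, mulVec, dotProduct, Fin.sum_univ_two]; ring

lemma chi1 (a b : ℝ) (v : Fin 2 → ℂ) :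
    ((a:ℂ) • v + (b:ℂ) • (I • σ3).mulVec v) 1 = ((a:ℂ) - b*I) * v 1 := by
  simp [σ3, mulVec, dotProduct, Fin.sum_univ_two]; ring

lemma Nbil_ne (v : Fin 2 → ℂ) (hv : v ≠ 0) : Nbil v ≠ 0 := by
  have h : Nbil v = ((normSq (v 0) + normSq (v 1) : ℝ) : ℂ) := by
    rw [Nbil_expand]; push_cast
    rw [Complex.normSq_eq_conj_mul_self, Complex.normSq_eq_conj_mul_self]
  rw [h]
  rw [Complex.ofReal_ne_zero]
  have : v 0 ≠ 0 ∨ v 1 ≠ 0 := by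
    by_contra hc
    push_neg at hc
    exact hv (funext fun i => by fin_cases i <;> simp [hc.1, hc.2])
  rcases this with h0 | h0
  · have := Complex.normSq_pos.mpr h0
    nlinarith [Complex.normSq_nonneg (v 1)]
  · have := Complex.normSq_pos.mpr h0
    nlinarith [Complex.normSq_nonneg (v 0)]

lemma K_ne (a b : ℝ) (hab : (a, b) ≠ (0, 0)) : ((a:ℂ)^2 + (b:ℂ)^2) ≠ 0 := by
  have hab' : a ≠ 0 ∨ b ≠ 0 := by
    by_contra hc; push_neg at hc; exact hab (by simp [hc.1, hc.2])
  have : (a:ℝ)^2 + b^2 ≠ 0 := by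
    rcases hab' with h | h <;> positivity
  have e : ((a:ℂ)^2 + (b:ℂ)^2) = (((a:ℝ)^2 + b^2 : ℝ) : ℂ) := by push_cast; ring
  rw [e, Complex.ofReal_ne_zero]; exact this

/-- Rotation identity for the bilinears. -/
lemma rotX (a b : ℝ) (v : Fin 2 → ℂ) (hv : v ≠ 0) (hab : (a, b) ≠ (0, 0)) :
    X1 ((a:ℂ) • v + (b:ℂ) • (I • σ3).mulVec v)
      = (((a:ℂ)^2 - b^2) * X1 v + (2*a*b) * X2 v) / ((a:ℂ)^2 + b^2) ∧
    X2 ((a:ℂ) • v + (b:ℂ) • (I • σ3).mulVec v)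
      = (((a:ℂ)^2 - b^2) * X2 v - (2*a*b) * X1 v) / ((a:ℂ)^2 + b^2) := by
  set w := (a:ℂ) • v + (b:ℂ) • (I • σ3).mulVec v with hw
  have hN := Nbil_ne v hv
  have hK := K_ne a b hab
  have eN : Nbil w = ((a:ℂ)^2 + b^2) * Nbil v := by
    rw [Nbil_expand, Nbil_expand]
    simp only [hw, chi0, chi1]
    simp only [_root_.map_mul, _root_.map_add, _root_.map_sub, Complex.conj_ofReal, Complex.conj_I]
    ring_nf
    simp [Complex.I_sq, pow_succ]
  have eS1 : star w ⬝ᵥ σ1.mulVec w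
      = ((a:ℂ)^2 - b^2) * (star v ⬝ᵥ σ1.mulVec v) + (2*a*b) * (star v ⬝ᵥ σ2.mulVec v) := by
    rw [S1_expand, S1_expand, S2_expand]
    simp only [hw, chi0, chi1]
    simp only [_root_.map_mul, _root_.map_add, _root_.map_sub, Complex.conj_ofReal, Complex.conj_I]
    ring_nf
    simp [Complex.I_sq, pow_succ]
    ring_nf
  have eS2 : star w ⬝ᵥ σ2.mulVec w
      = ((a:ℂ)^2 - b^2) * (star v ⬝ᵥ σ2.mulVec v) - (2*a*b) * (star v ⬝ᵥ σ1.mulVec v) := by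
    rw [S2_expand, S2_expand, S1_expand]
    simp only [hw, chi0, chi1]
    simp only [_root_.map_mul, _root_.map_add, _root_.map_sub, Complex.conj_ofReal, Complex.conj_I]
    ring_nf
    simp only [show (I:ℂ)^3 = -I by rw [pow_succ, Complex.I_sq]; ring, Complex.I_sq]
    ring
  rw [X1, X1, X2, X2, eS1, eS2, eN]
  generalize star v ⬝ᵥ σ1.mulVec v = s1
  generalize star v ⬝ᵥ σ2.mulVec v = s2
  constructor
  · rw [← mul_div_assoc, ← mul_div_assoc, ← add_div, div_div, mul_comm (Nbil v)]
  · rw [← mul_div_assoc, ← mul_div_assoc, div_sub_div_same, div_div, mul_comm (Nbil v)]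

lemma isMajorana_iff (v : Fin 2 → ℂ) :
    IsMajorana v ↔ conj (v 0) = I * v 1 ∧ conj (v 1) = I * v 0 := by
  constructor
  · intro h
    refine ⟨?_, ?_⟩
    · have := congrFun h 0
      simpa [σ1, mulVec, dotProduct, Fin.sum_univ_two] using this
    · have := congrFun h 1
      simpa [σ1, mulVec, dotProduct, Fin.sum_univ_two] using this
  · rintro ⟨h0, h1⟩
    funext i
    fin_cases i <;> simp [σ1, mulVec, dotProduct, Fin.sum_univ_two, h0, h1]

lemma coef_ne0 (a b : ℝ) (hab : (a, b) ≠ (0, 0)) :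
    ((a:ℂ) + b*I) ≠ 0 ∧ ((a:ℂ) - b*I) ≠ 0 := by
  constructor <;>
  · intro h'
    apply hab
    have hre := congrArg Complex.re h'
    have him := congrArg Complex.im h'
    simp at hre him
    simp [hre, him]

lemma chi_ne0_maj (a b : ℝ) (v : Fin 2 → ℂ) (hv : v ≠ 0) (hab : (a, b) ≠ (0, 0))
    (hM : IsMajorana v) :
    ((a:ℂ) • v + (b:ℂ) • (I • σ3).mulVec v) ≠ 0 ∧
    IsMajorana ((a:ℂ) • v + (b:ℂ) • (I • σ3).mulVec v) := by
  obtain ⟨ha, hb⟩ := coef_ne0 a b hab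
  rw [isMajorana_iff] at hM
  constructor
  · intro h
    have h0 := congrFun h 0
    have h1 := congrFun h 1
    rw [chi0] at h0
    rw [chi1] at h1
    simp only [Pi.zero_apply, mul_eq_zero] at h0 h1
    apply hv
    funext i
    fin_cases i
    · simpa using h0.resolve_left ha
    · simpa using h1.resolve_left hb
  · rw [isMajorana_iff, chi0, chi1]
    constructor
    · simp only [_root_.map_mul, _root_.map_add, Complex.conj_ofReal, Complex.conj_I, map_sub,
        hM.1]
      ring
    · simp only [_root_.map_mul, _root_.map_add, Complex.conj_ofReal, Complex.conj_I, map_sub,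
        hM.2]
      ring

lemma diffX {n : ℕ} (Ω : Set (Fin n → ℝ)) (hΩ : IsOpen Ω) (ζ : (Fin n → ℝ) → (Fin 2 → ℂ))
    (hdiff : DifferentiableOn ℝ ζ Ω) (hne : ∀ x ∈ Ω, ζ x ≠ 0) (x : Fin n → ℝ) (hx : x ∈ Ω) :
    DifferentiableAt ℝ (fun y => X1 (ζ y)) x ∧ DifferentiableAt ℝ (fun y => X2 (ζ y)) x := by
  have hxnh : Ω ∈ nhds x := hΩ.mem_nhds hx
  have hζx : DifferentiableAt ℝ ζ x := hdiff.differentiableAt hxnh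
  have h0 : DifferentiableAt ℝ (fun y => ζ y 0) x := (differentiableAt_pi.mp hζx) 0
  have h1 : DifferentiableAt ℝ (fun y => ζ y 1) x := (differentiableAt_pi.mp hζx) 1
  have hc0 : DifferentiableAt ℝ (fun y => conj (ζ y 0)) x := h0.star
  have hc1 : DifferentiableAt ℝ (fun y => conj (ζ y 1)) x := h1.star
  have hden : DifferentiableAt ℝ (fun y => conj (ζ y 0) * ζ y 0 + conj (ζ y 1) * ζ y 1) x :=
    (hc0.mul h0).add (hc1.mul h1)
  have hden0 : conj (ζ x 0) * ζ x 0 + conj (ζ x 1) * ζ x 1 ≠ 0 := by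
    rw [← Nbil_expand]; exact Nbil_ne _ (hne x hx)
  constructor
  · have e : (fun y => X1 (ζ y)) = fun y =>
        (conj (ζ y 0) * ζ y 1 + conj (ζ y 1) * ζ y 0) *
        (conj (ζ y 0) * ζ y 0 + conj (ζ y 1) * ζ y 1)⁻¹ :=
      funext fun y => by rw [X1, S1_expand, Nbil_expand, div_eq_mul_inv]
    rw [e]
    have hnum : DifferentiableAt ℝ
        (fun y => conj (ζ y 0) * ζ y 1 + conj (ζ y 1) * ζ y 0) x :=
      (hc0.mul h1).add (hc1.mul h0)
    exact hnum.mul (hden.inv hden0)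
  · have e : (fun y => X2 (ζ y)) = fun y =>
        (-(conj (ζ y 0) * I * ζ y 1) + I * conj (ζ y 1) * ζ y 0) *
        (conj (ζ y 0) * ζ y 0 + conj (ζ y 1) * ζ y 1)⁻¹ :=
      funext fun y => by rw [X2, S2_expand, Nbil_expand, div_eq_mul_inv]
    rw [e]
    have hnum : DifferentiableAt ℝ
        (fun y => -(conj (ζ y 0) * I * ζ y 1) + I * conj (ζ y 1) * ζ y 0) x :=
      ((hc0.mul_const I).mul h1).neg.add ((hc1.const_mul I).mul h0)
    exact hnum.mul (hden.inv hden0)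

lemma pderiv_combo {n : ℕ} (μ : Fin n) (x : Fin n → ℝ) (F G H : (Fin n → ℝ) → ℂ) (P Q K : ℂ)
    (hK : K ≠ 0) (hF : DifferentiableAt ℝ F x) (hG : DifferentiableAt ℝ G x)
    (hev : H =ᶠ[nhds x] fun y => (P * F y + Q * G y) / K) :
    pderiv μ H x = (P * pderiv μ F x + Q * pderiv μ G x) / K := by
  rw [pderiv, hev.fderiv_eq]
  have e : (fun y => (P * F y + Q * G y) / K) = fun y => (P/K) * F y + (Q/K) * G y :=
    funext fun y => by field_simp
  rw [e, fderiv_fun_add ((hF.const_mul _)) ((hG.const_mul _)), fderiv_const_mul hF,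
    fderiv_const_mul hG]
  simp only [ContinuousLinearMap.add_apply, ContinuousLinearMap.smul_apply, smul_eq_mul, pderiv]
  field_simp

/-- Let ζ : Ω → ℂ² be differentiable with ζ(x) a nonzero Majorana spinor on the open set
Ω, (a,b) ≠ (0,0) real, and χ = a·ζ + b·(iσ₃)ζ. Then χ(x) is a nonzero Majorana spinor
for every x, and the contracted derivative Y_a·∂_μ X_a of the bilinears is unchanged. -/
theorem contracted_bilinear_derivative_invariant {n : ℕ} (Ω : Set (Fin n → ℝ))
    (hΩ : IsOpen Ω) (ζ : (Fin n → ℝ) → (Fin 2 → ℂ)) (hdiff : DifferentiableOn ℝ ζ Ω)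
    (hζ : ∀ x ∈ Ω, ζ x ≠ 0 ∧ IsMajorana (ζ x)) (a b : ℝ) (hab : (a, b) ≠ (0, 0)) :
    let χ : (Fin n → ℝ) → (Fin 2 → ℂ) :=
      fun x => (a : ℂ) • ζ x + (b : ℂ) • (I • σ3).mulVec (ζ x)
    (∀ x ∈ Ω, χ x ≠ 0 ∧ IsMajorana (χ x)) ∧
    (∀ μ : Fin n, ∀ x ∈ Ω,
      Y1 (χ x) * pderiv μ (fun y => X1 (χ y)) x + Y2 (χ x) * pderiv μ (fun y => X2 (χ y)) x
      = Y1 (ζ x) * pderiv μ (fun y => X1 (ζ y)) x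
        + Y2 (ζ x) * pderiv μ (fun y => X2 (ζ y)) x) := by
  intro χ
  have hχ : ∀ y, χ y = (a:ℂ) • ζ y + (b:ℂ) • (I • σ3).mulVec (ζ y) := fun y => rfl
  constructor
  · intro x hx
    rw [hχ]
    exact chi_ne0_maj a b (ζ x) (hζ x hx).1 hab (hζ x hx).2
  · intro μ x hx
    simp only [hχ, Y1, Y2]
    have hxnh : Ω ∈ nhds x := hΩ.mem_nhds hx
    obtain ⟨hf, hg⟩ := diffX Ω hΩ ζ hdiff (fun y hy => (hζ y hy).1) x hx
    have hK := K_ne a b hab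
    have hev1 : (fun y => X1 ((a:ℂ) • ζ y + (b:ℂ) • (I • σ3).mulVec (ζ y))) =ᶠ[nhds x]
        (fun y => (((a:ℂ)^2 - b^2) * X1 (ζ y) + (2*a*b:ℂ) * X2 (ζ y)) / ((a:ℂ)^2 + b^2)) := by
      filter_upwards [hxnh] with y hy
      exact (rotX a b (ζ y) (hζ y hy).1 hab).1
    have hev2 : (fun y => X2 ((a:ℂ) • ζ y + (b:ℂ) • (I • σ3).mulVec (ζ y))) =ᶠ[nhds x]
        (fun y => (((a:ℂ)^2 - b^2) * X2 (ζ y) + (-(2*a*b):ℂ) * X1 (ζ y)) / ((a:ℂ)^2 + b^2)) := by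
      filter_upwards [hxnh] with y hy
      rw [(rotX a b (ζ y) (hζ y hy).1 hab).2]
      ring_nf
    have e1 := pderiv_combo μ x (fun y => X1 (ζ y)) (fun y => X2 (ζ y)) _
      (((a:ℂ)^2 - b^2)) ((2*a*b:ℂ)) (((a:ℂ)^2 + b^2)) hK hf hg hev1
    have e2 := pderiv_combo μ x (fun y => X2 (ζ y)) (fun y => X1 (ζ y)) _
      (((a:ℂ)^2 - b^2)) ((-(2*a*b):ℂ)) (((a:ℂ)^2 + b^2)) hK hg hf hev2
    obtain ⟨r1, r2⟩ := rotX a b (ζ x) (hζ x hx).1 hab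
    rw [e1, e2, r1, r2]
    field_simp
    ring
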